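/- (Score of the targeted Gaussian fluctuation likelihood equals the efficient influence function.) Assume additionally that σ²(A,X) ≥ c > 0 almost surely for some constant c. Define W(X) := (Ψ(X) − β₀^⊤ v(X)) v(X), Z(ε) := E_P[exp(ε^⊤ G⁻¹ W(X))], the fluctuated conditional mean μ_ε := Q̄^{(A)}(X) + σ²(A,X) (𝟙{A=1}/g(1,X) − 𝟙{A=0}/g(0,X)) ε^⊤ G⁻¹ v(X), and the log-likelihood (up to ε-independent constants) ℓ(ε, O) := −(Y − μ_ε)² / (2σ²(A,X)) + ε^⊤ G⁻¹ W(X) − log Z(ε). Then for P-almost every ω, the map ε ↦ ℓ(ε, O(ω)) is differentiable at ε = 0 with gradient equal to D*(O(ω)). -/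

import Mathlib

open MeasureTheory Matrix

/-- (Score of the targeted Gaussian fluctuation likelihood equals the
efficient influence function.) Assume `σ²(A,X) ≥ c > 0` a.s. With
`W(X) := (Ψ(X) − β₀ᵀ v(X)) v(X)`, `Z(ε) := E_P[exp(εᵀ G⁻¹ W(X))]`, fluctuated conditional
mean `μ_ε := Q̄^{(A)}(X) + σ²(A,X)(𝟙{A=1}/g(1,X) − 𝟙{A=0}/g(0,X)) εᵀ G⁻¹ v(X)`, and
log-likelihood `ℓ(ε,O) := −(Y − μ_ε)²/(2σ²(A,X)) + εᵀ G⁻¹ W(X) − log Z(ε)`, for `P`-a.e.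
`ω` the map `ε ↦ ℓ(ε, O(ω))` is differentiable at `ε = 0` with gradient `D*(O(ω))`. -/

noncomputable def dotCLM {p : ℕ} (d : Fin p → ℝ) : (Fin p → ℝ) →L[ℝ] ℝ :=
  LinearMap.toContinuousLinearMap
    { toFun := fun u => u ⬝ᵥ d
      map_add' := fun x y => add_dotProduct x y d
      map_smul' := fun c x => smul_dotProduct c x d }

lemma dotCLM_apply {p : ℕ} (d u : Fin p → ℝ) : dotCLM d u = u ⬝ᵥ d := rfl

noncomputable def dotCLML {p : ℕ} : (Fin p → ℝ) →ₗ[ℝ] ((Fin p → ℝ) →L[ℝ] ℝ) where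
  toFun := dotCLM
  map_add' := fun x y => by ext u; simp [dotCLM_apply, dotProduct_add]
  map_smul' := fun c x => by ext u; simp [dotCLM_apply, dotProduct_smul]

lemma continuous_dotCLM {p : ℕ} : Continuous (dotCLM (p := p)) :=
  (dotCLML (p := p)).continuous_of_finiteDimensional

lemma norm_dotCLM_le {p : ℕ} (d : Fin p → ℝ) : ‖dotCLM d‖ ≤ ∑ i, |d i| := by
  refine ContinuousLinearMap.opNorm_le_bound _ (Finset.sum_nonneg fun i _ => abs_nonneg _) fun u => ?_
  rw [dotCLM_apply]
  calc ‖u ⬝ᵥ d‖ ≤ ∑ i, |u i * d i| := by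
        simpa [dotProduct] using Finset.abs_sum_le_sum_abs (fun i => u i * d i) Finset.univ
    _ ≤ ∑ i, |d i| * ‖u‖ := by
        refine Finset.sum_le_sum fun i _ => ?_
        rw [abs_mul, mul_comm]
        exact mul_le_mul_of_nonneg_left (norm_le_pi_norm u i) (abs_nonneg _)
    _ = (∑ i, |d i|) * ‖u‖ := (Finset.sum_mul ..).symm


set_option maxHeartbeats 1000000 in
set_option synthInstance.maxHeartbeats 200000 in
theorem stmt_12
    {Ω 𝒳 : Type*} [MeasurableSpace Ω] [MeasurableSpace 𝒳]
    (P : Measure Ω) [IsProbabilityMeasure P]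
    (X : Ω → 𝒳) (hX : Measurable X)
    (A : Ω → Bool) (hA : Measurable A)
    (Y : Ω → ℝ) (hYm : Measurable Y) (hYb : ∃ C, ∀ ω, |Y ω| ≤ C)
    (mX : MeasurableSpace Ω) (hmX : mX = MeasurableSpace.comap X inferInstance)
    (g : Bool → Ω → ℝ) (hgm : ∀ a, Measurable[mX] (g a))
    (hgv : ∀ a, g a =ᵐ[P] P[fun ω => if A ω = a then (1:ℝ) else 0|mX])
    (δ : ℝ) (hδ : 0 < δ) (hgb : ∀ a, ∀ᵐ ω ∂P, δ ≤ g a ω ∧ g a ω ≤ 1 - δ)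
    (Qbar : Bool → Ω → ℝ)
    (hQbar : ∀ a ω, Qbar a ω
      = (P[fun ω' => (if A ω' = a then (1:ℝ) else 0) * Y ω'|mX]) ω / g a ω)
    (Ψ : Ω → ℝ) (hΨ : ∀ ω, Ψ ω = Qbar true ω - Qbar false ω)
    (QbarA : Ω → ℝ)
    (hQbarA : ∀ ω, QbarA ω
      = (if A ω = true then (1:ℝ) else 0) * Qbar true ω
        + (if A ω = false then (1:ℝ) else 0) * Qbar false ω)
    (Δstar : Ω → ℝ)
    (hΔstar : ∀ ω, Δstar ω
      = ((if A ω = true then (1:ℝ) else 0) / g true ω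
          - (if A ω = false then (1:ℝ) else 0) / g false ω) * (Y ω - QbarA ω))
    (σ2 : Bool → Ω → ℝ)
    (hσ2 : ∀ a ω, σ2 a ω
      = (P[fun ω' => (if A ω' = a then (1:ℝ) else 0) * (Y ω' - Qbar a ω') ^ 2|mX]) ω / g a ω)
    (σ2A : Ω → ℝ)
    (hσ2A : ∀ ω, σ2A ω
      = (if A ω = true then (1:ℝ) else 0) * σ2 true ω
        + (if A ω = false then (1:ℝ) else 0) * σ2 false ω)
    (c : ℝ) (hc : 0 < c) (hσ2c : ∀ᵐ ω ∂P, c ≤ σ2A ω)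
    {p : ℕ} (v : 𝒳 → Fin p → ℝ) (hvm : Measurable v) (hvb : ∃ C, ∀ x i, |v x i| ≤ C)
    (G : Matrix (Fin p) (Fin p) ℝ)
    (hG : G = Matrix.of fun i j => ∫ ω, v (X ω) i * v (X ω) j ∂P)
    (hGunit : IsUnit G)
    (β₀ : Fin p → ℝ) (hβ₀ : β₀ = G⁻¹ *ᵥ fun i => ∫ ω, Ψ ω * v (X ω) i ∂P)
    (Dstar : Ω → Fin p → ℝ)
    (hDstar : ∀ ω, Dstar ω
      = G⁻¹ *ᵥ fun i => (Δstar ω + Ψ ω - β₀ ⬝ᵥ v (X ω)) * v (X ω) i)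
    (W : Ω → Fin p → ℝ)
    (hW : ∀ ω, W ω = fun i => (Ψ ω - β₀ ⬝ᵥ v (X ω)) * v (X ω) i)
    (Z : (Fin p → ℝ) → ℝ)
    (hZ : ∀ ε, Z ε = ∫ ω, Real.exp (ε ⬝ᵥ (G⁻¹ *ᵥ W ω)) ∂P)
    (μfl : (Fin p → ℝ) → Ω → ℝ)
    (hμfl : ∀ ε ω, μfl ε ω
      = QbarA ω + σ2A ω *
          ((if A ω = true then (1:ℝ) else 0) / g true ω
            - (if A ω = false then (1:ℝ) else 0) / g false ω) *
          (ε ⬝ᵥ (G⁻¹ *ᵥ v (X ω))))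
    (ℓ : (Fin p → ℝ) → Ω → ℝ)
    (hℓ : ∀ ε ω, ℓ ε ω
      = -(Y ω - μfl ε ω) ^ 2 / (2 * σ2A ω) + ε ⬝ᵥ (G⁻¹ *ᵥ W ω) - Real.log (Z ε)) :
    ∀ᵐ ω ∂P, ∃ L : (Fin p → ℝ) →L[ℝ] ℝ,
      HasFDerivAt (fun ε => ℓ ε ω) L 0 ∧ ∀ u, L u = u ⬝ᵥ Dstar ω := by
  rename_i instΩ inst𝒳 instP
  letI instΩ' : MeasurableSpace Ω := instΩ
  -- basic measurability (ambient instance is instΩ; note mX shadows it in TC search)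
  have hmXle : mX ≤ instΩ := by rw [hmX]; exact hX.comap_le
  have hgm' : ∀ a, Measurable[instΩ] (g a) := fun a => (hgm a).mono hmXle le_rfl
  have hQm : ∀ a, Measurable[instΩ] (Qbar a) := by
    intro a
    have h : Qbar a = fun ω =>
        (P[fun ω' => (if A ω' = a then (1:ℝ) else 0) * Y ω'|mX]) ω / g a ω :=
      funext (hQbar a)
    rw [h]
    exact ((stronglyMeasurable_condExp.mono hmXle).measurable).div (hgm' a)
  have hΨm : Measurable[instΩ] Ψ := by
    have h : Ψ = fun ω => Qbar true ω - Qbar false ω := funext hΨ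
    rw [h]; exact (hQm true).sub (hQm false)
  have hvXmi : ∀ i, Measurable[instΩ] fun ω => v (X ω) i :=
    fun i => (measurable_pi_apply i).comp (hvm.comp hX)
  have hWm : Measurable[instΩ] W := by
    have h : W = fun ω => fun i => (Ψ ω - β₀ ⬝ᵥ v (X ω)) * v (X ω) i := funext hW
    rw [h]
    refine measurable_pi_lambda _ fun i => Measurable.mul (hΨm.sub ?_) (hvXmi i)
    simp only [dotProduct]
    exact Finset.measurable_sum _ fun j _ => (measurable_const.mul (hvXmi j))
  have hWmi : ∀ i, Measurable[instΩ] fun ω => W ω i :=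
    fun i => (measurable_pi_apply i).comp hWm
  have hwm : ∀ i, Measurable[instΩ] fun ω => (G⁻¹ *ᵥ W ω) i := by
    intro i
    simp only [Matrix.mulVec, dotProduct]
    exact Finset.measurable_sum _ fun j _ => measurable_const.mul (hWmi j)
  have hwm' : Measurable[instΩ] fun ω => G⁻¹ *ᵥ W ω := measurable_pi_lambda _ hwm
  -- bounds
  obtain ⟨C₀, hC₀⟩ := hYb
  set C : ℝ := max C₀ 0 with hCdef
  have hC : ∀ ω, |Y ω| ≤ C := fun ω => (hC₀ ω).trans (le_max_left _ _)
  have hC0 : 0 ≤ C := le_max_right _ _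
  obtain ⟨Cv₀, hCv₀⟩ := hvb
  set Cv : ℝ := max Cv₀ 0 with hCvdef
  have hCv : ∀ x i, |v x i| ≤ Cv := fun x i => (hCv₀ x i).trans (le_max_left _ _)
  have hCv0 : 0 ≤ Cv := le_max_right _ _
  have hcond : ∀ a : Bool, ∀ᵐ ω ∂P,
      |(P[fun ω' => (if A ω' = a then (1:ℝ) else 0) * Y ω'|mX]) ω| ≤ C := by
    intro a
    have h : ∀ᵐ ω ∂P, |(if A ω = a then (1:ℝ) else 0) * Y ω| ≤ ((⟨C, hC0⟩ : NNReal) : ℝ) := by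
      refine Filter.Eventually.of_forall fun ω => ?_
      by_cases h : A ω = a <;> simp [h, abs_mul, hC ω, hC0]
    exact ae_bdd_condExp_of_ae_bdd (m := mX) h
  have hQb : ∀ a : Bool, ∀ᵐ ω ∂P, |Qbar a ω| ≤ C / δ := by
    intro a
    filter_upwards [hcond a, hgb a] with ω h1 h2
    rw [hQbar a ω, abs_div, abs_of_pos (lt_of_lt_of_le hδ h2.1)]
    exact div_le_div₀ hC0 h1 hδ h2.1
  set Cβ : ℝ := (∑ i, |β₀ i|) * Cv with hCβdef
  have hCβ0 : 0 ≤ Cβ := mul_nonneg (Finset.sum_nonneg fun i _ => abs_nonneg _) hCv0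
  have hβv : ∀ ω, |β₀ ⬝ᵥ v (X ω)| ≤ Cβ := by
    intro ω
    calc |β₀ ⬝ᵥ v (X ω)| ≤ ∑ i, |β₀ i * v (X ω) i| :=
          Finset.abs_sum_le_sum_abs _ _
      _ ≤ ∑ i, |β₀ i| * Cv := by
          refine Finset.sum_le_sum fun i _ => ?_
          rw [abs_mul]
          exact mul_le_mul_of_nonneg_left (hCv _ i) (abs_nonneg _)
      _ = Cβ := (Finset.sum_mul ..).symm
  set M : ℝ := (2 * (C / δ) + Cβ) * Cv with hMdef
  have hM0 : 0 ≤ M := by positivity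
  have hΨb : ∀ᵐ ω ∂P, |Ψ ω| ≤ 2 * (C / δ) := by
    filter_upwards [hQb true, hQb false] with ω h1 h2
    rw [hΨ ω]
    calc |Qbar true ω - Qbar false ω| ≤ |Qbar true ω| + |Qbar false ω| := abs_sub _ _
      _ ≤ 2 * (C / δ) := by linarith
  have hWb : ∀ᵐ ω ∂P, ∀ i, |W ω i| ≤ M := by
    filter_upwards [hΨb] with ω h1 i
    rw [hW ω]
    calc |(Ψ ω - β₀ ⬝ᵥ v (X ω)) * v (X ω) i|
        = |Ψ ω - β₀ ⬝ᵥ v (X ω)| * |v (X ω) i| := abs_mul _ _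
      _ ≤ (2 * (C / δ) + Cβ) * Cv := by
          refine mul_le_mul ?_ (hCv _ i) (abs_nonneg _) (by positivity)
          calc |Ψ ω - β₀ ⬝ᵥ v (X ω)| ≤ |Ψ ω| + |β₀ ⬝ᵥ v (X ω)| := abs_sub _ _
            _ ≤ 2 * (C / δ) + Cβ := add_le_add h1 (hβv ω)
  set CG : ℝ := ∑ i, ∑ j, |G⁻¹ i j| with hCGdef
  have hCG0 : 0 ≤ CG := Finset.sum_nonneg fun i _ => Finset.sum_nonneg fun j _ => abs_nonneg _
  set M' : ℝ := CG * M with hM'def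
  have hM'0 : 0 ≤ M' := mul_nonneg hCG0 hM0
  have hwb : ∀ᵐ ω ∂P, ∀ i, |(G⁻¹ *ᵥ W ω) i| ≤ M' := by
    filter_upwards [hWb] with ω h1 i
    rw [show (G⁻¹ *ᵥ W ω) i = ∑ j, G⁻¹ i j * W ω j from rfl]
    calc |∑ j, G⁻¹ i j * W ω j| ≤ ∑ j, |G⁻¹ i j * W ω j| := Finset.abs_sum_le_sum_abs _ _
      _ ≤ ∑ j, |G⁻¹ i j| * M := by
          refine Finset.sum_le_sum fun j _ => ?_
          rw [abs_mul]
          exact mul_le_mul_of_nonneg_left (h1 j) (abs_nonneg _)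
      _ = (∑ j, |G⁻¹ i j|) * M := (Finset.sum_mul ..).symm
      _ ≤ CG * M := by
          refine mul_le_mul_of_nonneg_right ?_ hM0
          exact Finset.single_le_sum (f := fun i => ∑ j, |G⁻¹ i j|)
            (fun i _ => Finset.sum_nonneg fun j _ => abs_nonneg _) (Finset.mem_univ i)

  -- integrability helper
  have hint : ∀ (f : Ω → ℝ), Measurable[instΩ] f → ∀ K : ℝ, (∀ᵐ ω ∂P, |f ω| ≤ K) →
      Integrable f P := fun f hf K hK =>
    ⟨hf.aestronglyMeasurable,
      HasFiniteIntegral.of_bounded (C := K) (by simpa [Real.norm_eq_abs] using hK)⟩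
  have hΨvint : ∀ i, Integrable (fun ω => Ψ ω * v (X ω) i) P := by
    intro i
    refine hint _ (hΨm.mul (hvXmi i)) (2 * (C / δ) * Cv) ?_
    filter_upwards [hΨb] with ω h
    rw [abs_mul]
    exact mul_le_mul h (hCv _ i) (abs_nonneg _) (by positivity)
  have hvvint : ∀ k j, Integrable (fun ω => v (X ω) k * v (X ω) j) P := by
    intro k j
    refine hint _ ((hvXmi k).mul (hvXmi j)) (Cv * Cv) ?_
    refine Filter.Eventually.of_forall fun ω => ?_
    rw [abs_mul]
    exact mul_le_mul (hCv _ k) (hCv _ j) (abs_nonneg _) hCv0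
  have hGsymm : ∀ a b, G a b = G b a := by
    intro a b
    rw [hG]
    simp only [Matrix.of_apply]
    congr 1
    funext ω
    ring
  have hGβ : G *ᵥ β₀ = fun i => ∫ ω, Ψ ω * v (X ω) i ∂P := by
    rw [hβ₀, Matrix.mulVec_mulVec,
      Matrix.mul_nonsing_inv _ ((Matrix.isUnit_iff_isUnit_det G).mp hGunit),
      Matrix.one_mulVec]
  have hWint : ∀ j, Integrable (fun ω => W ω j) P :=
    fun j => hint _ (hWmi j) M (hWb.mono fun ω h => h j)
  have hintW : ∀ j, ∫ ω, W ω j ∂P = 0 := by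
    intro j
    have hexp : (fun ω => W ω j)
        = fun ω => Ψ ω * v (X ω) j - ∑ k, β₀ k * (v (X ω) k * v (X ω) j) := by
      funext ω
      rw [hW ω]
      simp only [dotProduct, sub_mul, Finset.sum_mul, mul_assoc]
    rw [hexp, integral_sub (hΨvint j)
      (integrable_finset_sum _ fun k _ => (hvvint k j).const_mul _),
      integral_finset_sum _ (fun k _ => (hvvint k j).const_mul _)]
    have h2 : ∑ k, ∫ ω, β₀ k * (v (X ω) k * v (X ω) j) ∂P = (G *ᵥ β₀) j := by
      rw [Matrix.mulVec]
      simp only [dotProduct]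
      refine Finset.sum_congr rfl fun k _ => ?_
      rw [integral_const_mul, mul_comm, hGsymm j k, hG]
      rfl
    rw [h2, hGβ]
    exact sub_self _
  have hwint : ∀ i, Integrable (fun ω => (G⁻¹ *ᵥ W ω) i) P :=
    fun i => hint _ (hwm i) M' (hwb.mono fun ω h => h i)
  have hintw : ∀ i, ∫ ω, (G⁻¹ *ᵥ W ω) i ∂P = 0 := by
    intro i
    have hexp : (fun ω => (G⁻¹ *ᵥ W ω) i) = fun ω => ∑ j, G⁻¹ i j * W ω j := rfl
    rw [hexp, integral_finset_sum _ (fun j _ => (hWint j).const_mul _)]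
    simp [integral_const_mul, hintW]
  -- the Z part
  have hFmeas : ∀ ε : Fin p → ℝ,
      AEStronglyMeasurable (fun ω => Real.exp (ε ⬝ᵥ (G⁻¹ *ᵥ W ω))) P := by
    intro ε
    refine (Real.measurable_exp.comp ?_).aestronglyMeasurable
    simp only [dotProduct]
    exact Finset.measurable_sum _ fun j _ => measurable_const.mul (hwm j)
  have hdotmeas : AEStronglyMeasurable (fun ω => dotCLM (G⁻¹ *ᵥ W ω)) P :=
    (continuous_dotCLM.comp_stronglyMeasurable hwm'.stronglyMeasurable).aestronglyMeasurable
  have hnormdot : ∀ᵐ ω ∂P, ‖dotCLM (G⁻¹ *ᵥ W ω)‖ ≤ p * M' := by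
    filter_upwards [hwb] with ω h
    refine (norm_dotCLM_le _).trans ?_
    calc ∑ i, |(G⁻¹ *ᵥ W ω) i| ≤ ∑ _i : Fin p, M' := Finset.sum_le_sum fun i _ => h i
      _ = p * M' := by simp [Finset.sum_const, nsmul_eq_mul]
  have hF'integrable : Integrable (fun ω =>
      Real.exp ((0 : Fin p → ℝ) ⬝ᵥ (G⁻¹ *ᵥ W ω)) • dotCLM (G⁻¹ *ᵥ W ω)) P := by
    have he : (fun ω => Real.exp ((0 : Fin p → ℝ) ⬝ᵥ (G⁻¹ *ᵥ W ω)) • dotCLM (G⁻¹ *ᵥ W ω))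
        = fun ω => dotCLM (G⁻¹ *ᵥ W ω) := by
      funext ω
      simp [zero_dotProduct]
    rw [he]
    exact ⟨hdotmeas, HasFiniteIntegral.of_bounded hnormdot⟩
  have hZ0 : Z 0 = 1 := by
    rw [hZ 0]
    have he : (fun ω => Real.exp ((0 : Fin p → ℝ) ⬝ᵥ (G⁻¹ *ᵥ W ω))) = fun _ => (1:ℝ) := by
      funext ω; simp [zero_dotProduct]
    rw [he]
    simp
  have key : HasFDerivAt (fun ε : Fin p → ℝ => ∫ ω, Real.exp (ε ⬝ᵥ (G⁻¹ *ᵥ W ω)) ∂P)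
      (∫ ω, Real.exp ((0 : Fin p → ℝ) ⬝ᵥ (G⁻¹ *ᵥ W ω)) • dotCLM (G⁻¹ *ᵥ W ω) ∂P) 0 := by
    refine hasFDerivAt_integral_of_dominated_of_fderiv_le
      (F := fun ε ω => Real.exp (ε ⬝ᵥ (G⁻¹ *ᵥ W ω)))
      (F' := fun ε ω => Real.exp (ε ⬝ᵥ (G⁻¹ *ᵥ W ω)) • dotCLM (G⁻¹ *ᵥ W ω))
      (bound := fun _ => Real.exp (p * M') * (p * M'))
      (Metric.ball_mem_nhds 0 one_pos) (Filter.Eventually.of_forall hFmeas) ?_ hF'integrable.aestronglyMeasurable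
      ?_ (integrable_const _) ?_
    · show Integrable (fun ω => Real.exp ((0 : Fin p → ℝ) ⬝ᵥ (G⁻¹ *ᵥ W ω))) P
      have he : (fun ω => Real.exp ((0 : Fin p → ℝ) ⬝ᵥ (G⁻¹ *ᵥ W ω))) = fun _ => (1:ℝ) := by
        funext ω; simp [zero_dotProduct]
      rw [he]
      exact integrable_const 1
    · filter_upwards [hwb] with ω h ε hε
      refine (norm_smul_le (Real.exp (ε ⬝ᵥ (G⁻¹ *ᵥ W ω))) (dotCLM (G⁻¹ *ᵥ W ω))).trans ?_
      rw [Real.norm_eq_abs, Real.abs_exp]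
      have hεn : ‖ε‖ ≤ 1 := le_of_lt (by simpa using mem_ball_zero_iff.mp hε)
      have hdot : ε ⬝ᵥ (G⁻¹ *ᵥ W ω) ≤ p * M' := by
        calc ε ⬝ᵥ (G⁻¹ *ᵥ W ω) ≤ |ε ⬝ᵥ (G⁻¹ *ᵥ W ω)| := le_abs_self _
          _ ≤ ∑ i, |ε i * (G⁻¹ *ᵥ W ω) i| := Finset.abs_sum_le_sum_abs _ _
          _ ≤ ∑ _i : Fin p, M' := by
              refine Finset.sum_le_sum fun i _ => ?_
              rw [abs_mul]
              calc |ε i| * |(G⁻¹ *ᵥ W ω) i| ≤ 1 * M' :=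
                    mul_le_mul ((norm_le_pi_norm ε i).trans hεn) (h i) (abs_nonneg _)
                      zero_le_one
                _ = M' := one_mul _
          _ = p * M' := by simp [Finset.sum_const, nsmul_eq_mul]
      have hT : ‖dotCLM (G⁻¹ *ᵥ W ω)‖ ≤ p * M' := by
        refine (norm_dotCLM_le _).trans ?_
        calc ∑ i, |(G⁻¹ *ᵥ W ω) i| ≤ ∑ _i : Fin p, M' := Finset.sum_le_sum fun i _ => h i
          _ = p * M' := by simp [Finset.sum_const, nsmul_eq_mul]
      exact mul_le_mul (Real.exp_le_exp.mpr hdot) hT (norm_nonneg _) (Real.exp_pos _).le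
    · refine Filter.Eventually.of_forall fun ω ε _ => ?_
      exact (Real.hasDerivAt_exp _).comp_hasFDerivAt ε (dotCLM (G⁻¹ *ᵥ W ω)).hasFDerivAt
  have hZderiv : HasFDerivAt Z
      (∫ ω, Real.exp ((0 : Fin p → ℝ) ⬝ᵥ (G⁻¹ *ᵥ W ω)) • dotCLM (G⁻¹ *ᵥ W ω) ∂P) 0 := by
    have hfz : Z = fun ε : Fin p → ℝ => ∫ ω, Real.exp (ε ⬝ᵥ (G⁻¹ *ᵥ W ω)) ∂P := funext hZ
    rw [hfz]
    exact key
  have hL3u : ∀ u : Fin p → ℝ,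
      (∫ ω, Real.exp ((0 : Fin p → ℝ) ⬝ᵥ (G⁻¹ *ᵥ W ω)) • dotCLM (G⁻¹ *ᵥ W ω) ∂P) u = 0 := by
    intro u
    rw [ContinuousLinearMap.integral_apply hF'integrable u]
    have he : (fun ω => (Real.exp ((0 : Fin p → ℝ) ⬝ᵥ (G⁻¹ *ᵥ W ω)) • dotCLM (G⁻¹ *ᵥ W ω)) u)
        = fun ω => ∑ i, u i * (G⁻¹ *ᵥ W ω) i := by
      funext ω
      simp [zero_dotProduct, dotCLM_apply, dotProduct]
    rw [he, integral_finset_sum _ (fun i _ => (hwint i).const_mul _)]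
    simp [integral_const_mul, hintw]
  have hlog : HasFDerivAt (fun ε : Fin p → ℝ => Real.log (Z ε))
      ((Z 0)⁻¹ • (∫ ω, Real.exp ((0 : Fin p → ℝ) ⬝ᵥ (G⁻¹ *ᵥ W ω)) • dotCLM (G⁻¹ *ᵥ W ω) ∂P)) 0 :=
    (Real.hasDerivAt_log (by rw [hZ0]; norm_num)).comp_hasFDerivAt 0 hZderiv
  -- final pointwise assembly
  filter_upwards [hσ2c] with ω hs
  have hs0 : σ2A ω ≠ 0 := ne_of_gt (lt_of_lt_of_le hc hs)
  have hfun : (fun ε => ℓ ε ω) = fun ε : Fin p → ℝ =>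
      -(Y ω - (QbarA ω + σ2A ω *
          ((if A ω = true then (1:ℝ) else 0) / g true ω
            - (if A ω = false then (1:ℝ) else 0) / g false ω) *
          (ε ⬝ᵥ (G⁻¹ *ᵥ v (X ω))))) ^ 2 / (2 * σ2A ω)
        + ε ⬝ᵥ (G⁻¹ *ᵥ W ω) - Real.log (Z ε) := by
    funext ε
    rw [hℓ ε ω, hμfl ε ω]
  have hφr := (dotCLM (G⁻¹ *ᵥ v (X ω))).hasFDerivAt (x := (0 : Fin p → ℝ))
  have hq := ((((hasDerivAt_id ((dotCLM (G⁻¹ *ᵥ v (X ω))) (0 : Fin p → ℝ))).const_mul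
      (σ2A ω * ((if A ω = true then (1:ℝ) else 0) / g true ω
        - (if A ω = false then (1:ℝ) else 0) / g false ω))).const_add
      (QbarA ω)).const_sub (Y ω)).pow 2 |>.neg.div_const (2 * σ2A ω)
  have hcomp := hq.comp_hasFDerivAt (0 : Fin p → ℝ) hφr
  have h2 : HasFDerivAt (fun ε : Fin p → ℝ => ε ⬝ᵥ (G⁻¹ *ᵥ W ω))
      (dotCLM (G⁻¹ *ᵥ W ω)) 0 := (dotCLM _).hasFDerivAt
  have htot := (hcomp.add h2).sub hlog
  refine ⟨?_, ?_, fun u => ?_⟩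
  on_goal 2 => rw [hfun]; exact htot
  · have hD : u ⬝ᵥ Dstar ω
        = Δstar ω * (u ⬝ᵥ (G⁻¹ *ᵥ v (X ω))) + u ⬝ᵥ (G⁻¹ *ᵥ W ω) := by
      rw [hDstar ω]
      have hsplit : (fun i => (Δstar ω + Ψ ω - β₀ ⬝ᵥ v (X ω)) * v (X ω) i)
          = (Δstar ω • v (X ω)) + W ω := by
        funext i
        rw [hW ω]
        simp only [Pi.add_apply, Pi.smul_apply, smul_eq_mul]
        ring
      rw [hsplit, Matrix.mulVec_add, Matrix.mulVec_smul, dotProduct_add,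
        dotProduct_smul, smul_eq_mul]
    simp only [ContinuousLinearMap.sub_apply, ContinuousLinearMap.add_apply,
      ContinuousLinearMap.coe_smul', Pi.smul_apply, smul_eq_mul, dotCLM_apply,
      hL3u u, map_zero, id_eq, mul_zero, sub_zero]
    rw [hD, hΔstar ω]
    field_simp
    ring
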